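/- Let q ≥ 2 and j ≥ 2, and define b_{j,m,n} by b_{j,m,1} = [1^m 0^j]_q and b_{j,m,n+1} = b_{j,m,n} - (q^{j+m-n} - 1). Fix s with 1 < s < q and write s̄ = q - s. Then for all 1 ≤ n ≤ q^{j-1} + 1 and m ≥ n, b_{j,m,n} lies in the interval [[s̄^{j+m-n}]_q, [1^{j+m-n} 0]_q], i.e. s̄ · (q^{j+m-n} - 1)/(q-1) ≤ b_{j,m,n} ≤ q · (q^{j+m-n} - 1)/(q-1). -/

import Mathlib

set_option maxHeartbeats 400000


/-- `[1^m 0^j]_q = ∑_{i<m} q^{j+i}`. -/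
def onesZeros (q j m : ℕ) : ℕ := ∑ i ∈ Finset.range m, q ^ (j + i)

/-- `bSeq q j m t` is `b_{j,m,t+1}`, defined by `b_{j,m,1} = [1^m 0^j]_q`
and `b_{j,m,n+1} = b_{j,m,n} - (q^{j+m-n} - 1)`. -/
def bSeq (q j m : ℕ) : ℕ → ℕ
  | 0 => onesZeros q j m
  | t + 1 => bSeq q j m t - (q ^ (j + m - t - 1) - 1)

lemma geomAux (q t : ℕ) (hq : 1 ≤ q) :
    (q - 1) * (∑ i ∈ Finset.range t, q ^ i) + 1 = q ^ t := by
  induction t with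
  | zero => simp
  | succ t ih =>
    obtain ⟨p, rfl⟩ : ∃ p, q = p + 1 := ⟨q - 1, by omega⟩
    rw [Finset.sum_range_succ, pow_succ] at *
    simp only [Nat.add_sub_cancel] at *
    nlinarith [ih]

lemma bSeq_eq (q j m : ℕ) (hq : 1 ≤ q) :
    ∀ t, t ≤ m → bSeq q j m t = (∑ i ∈ Finset.range (m - t), q ^ (j + i)) + t := by
  intro t
  induction t with
  | zero => intro _; simp [bSeq, onesZeros]
  | succ t ih =>
    intro ht
    obtain ⟨r, hr⟩ : ∃ r, m = t + 1 + r := ⟨m - (t + 1), by omega⟩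
    have hp : 1 ≤ q ^ (j + r) := Nat.one_le_pow _ _ (by omega)
    rw [bSeq, ih (by omega)]
    rw [show j + m - t - 1 = j + r by omega]
    rw [show m - t = r + 1 by omega, Finset.sum_range_succ]
    rw [show m - (t + 1) = r by omega]
    omega

/-- for `q ≥ 2`, `j ≥ 2`, `1 < s < q`, `1 ≤ n ≤ q^{j-1}+1`, `m ≥ n`:
`s̄·(q^{j+m-n}-1)/(q-1) ≤ b_{j,m,n} ≤ q·(q^{j+m-n}-1)/(q-1)` with `s̄ = q - s`. -/
theorem stmt7 (q j s : ℕ) (hq : 2 ≤ q) (hj : 2 ≤ j) (hs1 : 1 < s) (hsq : s < q)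
    (n m : ℕ) (hn1 : 1 ≤ n) (hn2 : n ≤ q ^ (j - 1) + 1) (hm : n ≤ m) :
    (q - s) * (q ^ (j + m - n) - 1) / (q - 1) ≤ bSeq q j m (n - 1) ∧
      bSeq q j m (n - 1) ≤ q * (q ^ (j + m - n) - 1) / (q - 1) := by
  set k := j + m - n with hk
  set u := ∑ i ∈ Finset.range k, q ^ i with hu
  set v := ∑ i ∈ Finset.range (m - n + 1), q ^ i with hv
  have hq1 : 1 ≤ q := by omega
  have hgu : (q - 1) * u + 1 = q ^ k := geomAux q k hq1
  have hgv : (q - 1) * v + 1 = q ^ (m - n + 1) := geomAux q (m - n + 1) hq1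
  -- rewrite the divisions
  have hpow : q ^ k - 1 = (q - 1) * u := by omega
  have hd1 : (q - s) * (q ^ k - 1) / (q - 1) = (q - s) * u := by
    rw [hpow, ← mul_assoc, mul_comm (q - s) (q - 1), mul_assoc,
      Nat.mul_div_cancel_left _ (by omega : 0 < q - 1)]
  have hd2 : q * (q ^ k - 1) / (q - 1) = q * u := by
    rw [hpow, ← mul_assoc, mul_comm q (q - 1), mul_assoc,
      Nat.mul_div_cancel_left _ (by omega : 0 < q - 1)]
  -- closed form for bSeq
  have hb : bSeq q j m (n - 1) = q ^ j * v + (n - 1) := by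
    rw [bSeq_eq q j m hq1 (n - 1) (by omega)]
    have : m - (n - 1) = m - n + 1 := by omega
    rw [this, Finset.mul_sum]
    congr 1
    exact Finset.sum_congr rfl fun i _ => by rw [← pow_add]
  rw [hd1, hd2, hb]
  -- power facts
  have hke : q ^ k = q ^ j * q ^ (m - n) := by rw [← pow_add]; congr 1; omega
  have hve : q ^ (m - n + 1) = q * q ^ (m - n) := by rw [pow_succ']
  have hje : q ^ j = q * q ^ (j - 1) := by
    rw [← pow_succ']; congr 1; omega
  have hPq : q ≤ q ^ (j - 1) := by
    calc q = q ^ 1 := (pow_one q).symm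
    _ ≤ q ^ (j - 1) := Nat.pow_le_pow_right (by omega) (by omega)
  have he1 : 1 ≤ q ^ (m - n) := Nat.one_le_pow _ _ (by omega)
  rw [hke] at hgu
  rw [hve] at hgv
  -- pass to ℤ
  zify [hq1] at hgu hgv
  have H1 : ((q : ℤ) - 1) * u = (q : ℤ) ^ j * (q : ℤ) ^ (m - n) - 1 := by linarith
  have H2 : ((q : ℤ) - 1) * v = (q : ℤ) * (q : ℤ) ^ (m - n) - 1 := by linarith
  have H3 : ((q : ℤ)) ^ j = (q : ℤ) * (q : ℤ) ^ (j - 1) := by exact_mod_cast hje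
  have hA0 : (0 : ℤ) ≤ (q : ℤ) ^ j := by positivity
  have he0 : (1 : ℤ) ≤ (q : ℤ) ^ (m - n) := by exact_mod_cast he1
  have hPq' : ((q : ℤ)) ≤ (q : ℤ) ^ (j - 1) := by exact_mod_cast hPq
  have hnP : ((n : ℤ)) - 1 ≤ (q : ℤ) ^ (j - 1) := by
    have : (n : ℤ) ≤ ((q ^ (j - 1) : ℕ) : ℤ) + 1 := by exact_mod_cast hn2
    push_cast at this
    linarith
  have hu0 : (0 : ℤ) ≤ (u : ℤ) := by positivity
  have hqZ : (2 : ℤ) ≤ (q : ℤ) := by exact_mod_cast hq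
  have hsZ : (2 : ℤ) ≤ (s : ℤ) := by exact_mod_cast hs1
  have hsqZ : ((s : ℤ)) < (q : ℤ) := by exact_mod_cast hsq
  have hn1Z : (1 : ℤ) ≤ (n : ℤ) := by exact_mod_cast hn1
  set A : ℤ := (q : ℤ) ^ j with hA
  set e : ℤ := (q : ℤ) ^ (m - n) with he
  set P : ℤ := (q : ℤ) ^ (j - 1) with hP
  clear_value k u v A e P
  clear hk hu hv he hP
  constructor
  · -- lower bound
    zify [le_of_lt hsq, hn1]
    rw [show ((q:ℤ)) ^ j = A from hA.symm]
    have c1 : ((q : ℤ) - 1) * ((A * v + ((n : ℤ) - 1)) - ((q : ℤ) - (s : ℤ)) * u)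
        = (s : ℤ) * (A * e) - A + ((q : ℤ) - (s : ℤ)) + ((n : ℤ) - 1) * ((q : ℤ) - 1) := by
      linear_combination A * H2 - ((q : ℤ) - (s : ℤ)) * H1
    have t1 : (0:ℤ) ≤ ((s:ℤ) - 2) * (A * e) :=
      mul_nonneg (by linarith) (mul_nonneg hA0 (by linarith))
    have t2 : (0:ℤ) ≤ A * (e - 1) := mul_nonneg hA0 (by linarith)
    have t3 : (0:ℤ) ≤ ((n:ℤ) - 1) * ((q:ℤ) - 1) := mul_nonneg (by linarith) (by linarith)
    have hR : (0:ℤ) ≤ (s : ℤ) * (A * e) - A + ((q : ℤ) - (s : ℤ)) + ((n : ℤ) - 1) * ((q : ℤ) - 1) := by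
      have hx : (s : ℤ) * (A * e) - A + ((q : ℤ) - (s : ℤ)) + ((n : ℤ) - 1) * ((q : ℤ) - 1)
          = ((s:ℤ) - 2) * (A * e) + 2 * (A * (e - 1)) + A + ((q : ℤ) - (s : ℤ))
            + ((n : ℤ) - 1) * ((q : ℤ) - 1) := by ring
      rw [hx]
      linarith [t1, t2, t3, hA0]
    by_contra hcon
    push_neg at hcon
    have hneg : ((q : ℤ) - 1) * ((A * v + ((n : ℤ) - 1)) - ((q : ℤ) - (s : ℤ)) * u) < 0 :=
      mul_neg_of_pos_of_neg (by linarith) (by linarith)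
    linarith [c1 ▸ hneg]
  · -- upper bound
    zify [hn1]
    rw [show ((q:ℤ)) ^ j = A from hA.symm]
    have c2 : ((q : ℤ) - 1) * ((q : ℤ) * u - (A * v + ((n : ℤ) - 1)))
        = A - (q : ℤ) - ((n : ℤ) - 1) * ((q : ℤ) - 1) := by
      linear_combination (q : ℤ) * H1 - A * H2
    have t4 : (0:ℤ) ≤ (P - ((n:ℤ) - 1)) * ((q:ℤ) - 1) :=
      mul_nonneg (by linarith) (by linarith)
    have hR2 : (0:ℤ) ≤ A - (q : ℤ) - ((n : ℤ) - 1) * ((q : ℤ) - 1) := by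
      have hx : A - (q : ℤ) - ((n : ℤ) - 1) * ((q : ℤ) - 1)
          = (P - ((n:ℤ) - 1)) * ((q:ℤ) - 1) + P - (q : ℤ) := by rw [H3]; ring
      rw [hx]
      linarith [t4, hPq']
    by_contra hcon
    push_neg at hcon
    have hneg : ((q : ℤ) - 1) * ((q : ℤ) * u - (A * v + ((n : ℤ) - 1))) < 0 :=
      mul_neg_of_pos_of_neg (by linarith) (by linarith)
    linarith [c2 ▸ hneg]
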